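/- Let T be a simplex of the mesh with diameter h_T, let I_h denote the Lagrange nodal interpolation onto P¹(T), and let σ_h, v_h be piecewise-linear functions (σ_h, v_h ∈ P¹(T) on T). Then for any 1 ≤ p ≤ ∞ and q with 1/p + 1/q = 1: ∫_T (σ_h v_h − I_h(σ_h v_h)) dx ≤ h_T² ‖∇σ_h‖_{L^p(T)} ‖∇v_h‖_{L^q(T)}. -/

import Mathlib

open MeasureTheory
open scoped ENNReal

noncomputable section

/-- Euclidean space `ℝ^d`. -/
abbrev Euc (d : ℕ) := EuclideanSpace ℝ (Fin d)

/-- The `L^p(D)` norm. -/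
def lpOn {d : ℕ} (p : ℝ≥0∞) (D : Set (Euc d)) (f : Euc d → ℝ) : ℝ :=
  (eLpNorm f p ((volume : Measure (Euc d)).restrict D)).toReal

/-- `f` is a (globally defined) affine function, i.e. a polynomial of degree ≤ 1. -/
def AffineFn {d : ℕ} (f : Euc d → ℝ) : Prop :=
  ∃ (L : Euc d →L[ℝ] ℝ) (c : ℝ), ∀ x, f x = L x + c

open Finset in
lemma cov_identity {n : ℕ} (w a b : Fin n → ℝ) (hw1 : ∑ i, w i = 1) :
    ∑ i, ∑ j, w i * w j * ((a i - a j) * (b i - b j))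
      = 2 * (∑ i, w i * (a i * b i)) - 2 * ((∑ i, w i * a i) * (∑ i, w i * b i)) := by
  have key : ∀ i j : Fin n, w i * w j * ((a i - a j) * (b i - b j))
      = (w i * (a i * b i)) * w j + w i * (w j * (a j * b j))
        - ((w i * a i) * (w j * b j) + (w i * b i) * (w j * a j)) := by intros; ring
  simp only [key, Finset.sum_add_distrib, Finset.sum_sub_distrib, ← Finset.sum_mul,
    ← Finset.mul_sum, ← Finset.sum_mul_sum]
  rw [hw1]; ring

lemma cov_bound {n : ℕ} (w a b : Fin n → ℝ) (hw0 : ∀ i, 0 ≤ w i) (hw1 : ∑ i, w i = 1)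
    {A B : ℝ} (hab : ∀ i j, |a i - a j| ≤ A) (hbb : ∀ i j, |b i - b j| ≤ B) :
    |(∑ i, w i * a i) * (∑ i, w i * b i) - ∑ i, w i * (a i * b i)| ≤ (1/2) * (A * B) := by
  have hid := cov_identity w a b hw1
  have hS : |∑ i, ∑ j, w i * w j * ((a i - a j) * (b i - b j))| ≤ A * B := by
    calc |∑ i, ∑ j, w i * w j * ((a i - a j) * (b i - b j))|
        ≤ ∑ i, ∑ j, |w i * w j * ((a i - a j) * (b i - b j))| := by
          refine (Finset.abs_sum_le_sum_abs _ _).trans ?_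
          exact Finset.sum_le_sum fun i _ => Finset.abs_sum_le_sum_abs _ _
      _ ≤ ∑ i, ∑ j, w i * w j * (A * B) := by
          refine Finset.sum_le_sum fun i _ => Finset.sum_le_sum fun j _ => ?_
          rw [abs_mul, abs_mul, abs_of_nonneg (hw0 i), abs_of_nonneg (hw0 j), abs_mul]
          have h1 : |a i - a j| * |b i - b j| ≤ A * B :=
            mul_le_mul (hab i j) (hbb i j) (abs_nonneg _)
              ((abs_nonneg (a i - a j)).trans (hab i j))
          exact mul_le_mul_of_nonneg_left h1 (mul_nonneg (hw0 i) (hw0 j))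
      _ = A * B := by
          simp only [← Finset.sum_mul, ← Finset.mul_sum]
          rw [hw1]; ring
  rw [hid] at hS
  have := abs_le.mp hS
  rw [abs_le]; constructor <;> nlinarith [this.1, this.2]

lemma pointwise_bound {d : ℕ} (v : Fin (d + 1) → Euc d) (L M N : Euc d →L[ℝ] ℝ) (c e f0 : ℝ)
    (hqi : ∀ i, N (v i) + f0 = (L (v i) + c) * (M (v i) + e))
    {A B : ℝ} (hA : ∀ i j, |L (v i) - L (v j)| ≤ A) (hB : ∀ i j, |M (v i) - M (v j)| ≤ B)
    {x : Euc d} (hx : x ∈ convexHull ℝ (Set.range v)) :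
    |(L x + c) * (M x + e) - (N x + f0)| ≤ (1/2) * (A * B) := by
  rw [convexHull_range_eq_exists_affineCombination] at hx
  obtain ⟨s, w, hw0, hw1, hxc⟩ := hx
  set w' : Fin (d + 1) → ℝ := Set.indicator (↑s) w with hw'def
  have hw'0 : ∀ i, 0 ≤ w' i := fun i =>
    Set.indicator_apply_nonneg (fun hi => hw0 i (Finset.mem_coe.mp hi))
  have hw'1 : ∑ i, w' i = 1 := by
    rw [hw'def, Finset.sum_indicator_subset _ (Finset.subset_univ s)] at *
    exact hw1
  have hxe : x = ∑ i, w' i • v i := by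
    rw [← hxc, Finset.affineCombination_indicator_subset w v (Finset.subset_univ s),
      affineCombination_eq_centerMass hw'1, Finset.centerMass_eq_of_sum_1 _ _ hw'1]
  have hLx : L x = ∑ i, w' i * L (v i) := by
    rw [hxe, map_sum]; simp [smul_eq_mul]
  have hMx : M x = ∑ i, w' i * M (v i) := by
    rw [hxe, map_sum]; simp [smul_eq_mul]
  have hNx : N x + f0 = ∑ i, w' i * (N (v i) + f0) := by
    rw [hxe, map_sum]
    simp only [_root_.map_smul, smul_eq_mul, mul_add, Finset.sum_add_distrib, ← Finset.sum_mul, hw'1,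
      one_mul]
  have key : (L x + c) * (M x + e) - (N x + f0)
      = (∑ i, w' i * (L (v i) + c)) * (∑ i, w' i * (M (v i) + e))
        - ∑ i, w' i * ((L (v i) + c) * (M (v i) + e)) := by
    have h1 : ∑ i, w' i * (L (v i) + c) = L x + c := by
      simp only [mul_add, Finset.sum_add_distrib, ← Finset.sum_mul, hw'1, one_mul, hLx]
    have h2 : ∑ i, w' i * (M (v i) + e) = M x + e := by
      simp only [mul_add, Finset.sum_add_distrib, ← Finset.sum_mul, hw'1, one_mul, hMx]
    rw [h1, h2, hNx]
    congr 1
    exact Finset.sum_congr rfl fun i _ => by rw [hqi i]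
  rw [key]
  have habs : ∀ i j, |(L (v i) + c) - (L (v j) + c)| ≤ A := by
    intro i j; simpa using hA i j
  have hbbs : ∀ i j, |(M (v i) + e) - (M (v j) + e)| ≤ B := by
    intro i j; simpa using hB i j
  exact cov_bound w' _ _ hw'0 hw'1 habs hbbs

lemma subset_closure_interior_of_convex {E : Type*} [NormedAddCommGroup E] [NormedSpace ℝ E]
    {s : Set E} (hs : Convex ℝ s) (h : (interior s).Nonempty) :
    s ⊆ closure (interior s) := by
  obtain ⟨y, hy⟩ := h
  intro x hx
  have hseq : ∀ n : ℕ, ((1:ℝ) - 1/(n+1)) • x + ((1/(n+1) : ℝ)) • y ∈ interior s := by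
    intro n
    refine hs.combo_closure_interior_mem_interior (subset_closure hx) hy ?_ (by positivity)
      (by ring)
    have h1 : (1:ℝ)/(n+1) ≤ 1 := by
      rw [div_le_one (by positivity)]; linarith [Nat.cast_nonneg (α := ℝ) n]
    linarith
  have h0 : Filter.Tendsto (fun n : ℕ => (1:ℝ)/(n+1)) Filter.atTop (nhds 0) :=
    tendsto_one_div_add_atTop_nhds_zero_nat
  have htt : Filter.Tendsto (fun n : ℕ => ((1:ℝ) - 1/(n+1)) • x + ((1/(n+1) : ℝ)) • y)
      Filter.atTop (nhds x) := by
    have := ((Filter.Tendsto.const_sub 1 h0).smul_const x).add (h0.smul_const y)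
    simpa using this
  exact mem_closure_of_tendsto htt (Filter.Eventually.of_forall hseq)

/-- **Lemma 3.1 (lumped-mass / nodal interpolation error for a product).**
Let `T` be a nondegenerate open simplex with vertices `v` and diameter `h_T`, let
`σ_h, v_h ∈ P¹(T)` and let `I_h(σ_h v_h) ∈ P¹(T)` be the Lagrange nodal interpolant of the
product (the affine function `q` agreeing with `σ_h v_h` at the vertices).  Then, for any
`1 ≤ p ≤ ∞` and `q` with `1/p + 1/q = 1`,
`∫_T (σ_h v_h - I_h(σ_h v_h)) dx ≤ h_T² ‖∇σ_h‖_{L^p(T)} ‖∇v_h‖_{L^q(T)}`. -/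
theorem lumped_product_interpolation (d : ℕ)
    (v : Fin (d + 1) → Euc d) (hv : AffineIndependent ℝ v)
    (T : Set (Euc d)) (hT : T = interior (convexHull ℝ (Set.range v)))
    (σh vh q : Euc d → ℝ) (hσ : AffineFn σh) (hvh : AffineFn vh)
    (hq : AffineFn q) (hqi : ∀ i, q (v i) = σh (v i) * vh (v i))
    (p p' : ℝ≥0∞) (hp : 1 ≤ p) (hpq : p⁻¹ + p'⁻¹ = 1) :
    (∫ x in T, (σh x * vh x - q x)) ≤
      Metric.diam T ^ 2 *
        (lpOn p T (fun x => ‖gradient σh x‖) * lpOn p' T (fun x => ‖gradient vh x‖)) := by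
  obtain ⟨L, c, hL⟩ := hσ
  obtain ⟨M, e, hM⟩ := hvh
  obtain ⟨N, f0, hN⟩ := hq
  set K := convexHull ℝ (Set.range v) with hKdef
  have hKconv : Convex ℝ K := convex_convexHull ℝ _
  have hKcpt : IsCompact K := (Set.finite_range v).isCompact_convexHull ℝ
  have hspan : affineSpan ℝ (Set.range v) = ⊤ := by
    rw [hv.affineSpan_eq_top_iff_card_eq_finrank_add_one]
    simp
  have hint : (interior K).Nonempty := by
    rw [hKconv.interior_nonempty_iff_affineSpan_eq_top, hKdef, affineSpan_convexHull]
    exact hspan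
  have hTK : T ⊆ K := hT ▸ interior_subset
  have hTopen : IsOpen T := hT ▸ isOpen_interior
  have hTne : T.Nonempty := hT ▸ hint
  have hTbdd : Bornology.IsBounded T := hKcpt.isBounded.subset hTK
  have hvol_pos : 0 < volume T := hTopen.measure_pos _ hTne
  have hvol_fin : volume T < ⊤ := hTbdd.measure_lt_top
  have hKclT : K ⊆ closure T := by
    rw [hT]; exact subset_closure_interior_of_convex hKconv hint
  set h := Metric.diam T with hhdef
  have hh0 : 0 ≤ h := Metric.diam_nonneg
  have hdist : ∀ i j, ‖v i - v j‖ ≤ h := by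
    intro i j
    have h1 : dist (v i) (v j) ≤ Metric.diam (closure T) :=
      Metric.dist_le_diam_of_mem hTbdd.closure
        (hKclT (subset_convexHull ℝ _ ⟨i, rfl⟩)) (hKclT (subset_convexHull ℝ _ ⟨j, rfl⟩))
    rw [Metric.diam_closure] at h1
    rwa [dist_eq_norm] at h1
  have hA : ∀ i j, |L (v i) - L (v j)| ≤ ‖L‖ * h := by
    intro i j
    rw [← map_sub, ← Real.norm_eq_abs]
    exact (L.le_opNorm _).trans (mul_le_mul_of_nonneg_left (hdist i j) (norm_nonneg L))
  have hB : ∀ i j, |M (v i) - M (v j)| ≤ ‖M‖ * h := by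
    intro i j
    rw [← map_sub, ← Real.norm_eq_abs]
    exact (M.le_opNorm _).trans (mul_le_mul_of_nonneg_left (hdist i j) (norm_nonneg M))
  have hqi' : ∀ i, N (v i) + f0 = (L (v i) + c) * (M (v i) + e) := by
    intro i; rw [← hN, ← hL, ← hM, hqi]
  have hbound : ∀ x ∈ T, |σh x * vh x - q x| ≤ (1/2) * ((‖L‖ * h) * (‖M‖ * h)) := by
    intro x hx
    have := pointwise_bound v L M N c e f0 hqi' hA hB (hTK hx)
    rwa [← hL, ← hM, ← hN] at this
  -- integrability / integral bound
  have hcont : Continuous fun x : Euc d => σh x * vh x - q x := by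
    have h1 : (fun x : Euc d => σh x * vh x - q x)
        = fun x => (L x + c) * (M x + e) - (N x + f0) := by
      funext x; rw [hL, hM, hN]
    rw [h1]
    exact ((L.continuous.add continuous_const).mul (M.continuous.add continuous_const)).sub
      (N.continuous.add continuous_const)
  have hIb : (∫ x in T, (σh x * vh x - q x))
      ≤ (1/2) * ((‖L‖ * h) * (‖M‖ * h)) * (volume T).toReal := by
    refine (le_abs_self _).trans ?_
    rw [← Real.norm_eq_abs]
    exact norm_setIntegral_le_of_norm_le_const hvol_fin
      (fun x hx => by rw [Real.norm_eq_abs]; exact hbound x hx)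
  -- gradients are constant
  have hgradσ : (fun x : Euc d => ‖gradient σh x‖) = fun _ => ‖L‖ := by
    funext x
    have hσ' : σh = fun y => L y + c := funext hL
    have hf : fderiv ℝ σh x = L := by rw [hσ']; exact (L.hasFDerivAt.add_const c).fderiv
    rw [gradient, hf]
    exact LinearIsometryEquiv.norm_map _ _
  have hgradv : (fun x : Euc d => ‖gradient vh x‖) = fun _ => ‖M‖ := by
    funext x
    have hM' : vh = fun y => M y + e := funext hM
    have hf : fderiv ℝ vh x = M := by rw [hM']; exact (M.hasFDerivAt.add_const e).fderiv
    rw [gradient, hf]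
    exact LinearIsometryEquiv.norm_map _ _
  -- lp norms of constants
  have hp0 : p ≠ 0 := by intro hc; simp [hc] at hp
  have hp'0 : p' ≠ 0 := by intro hc; rw [hc] at hpq; simp at hpq
  have hμ0 : (volume : Measure (Euc d)).restrict T ≠ 0 := by
    intro hc
    have := congrArg (fun μ : Measure (Euc d) => μ Set.univ) hc
    simp only [Measure.restrict_apply_univ, Measure.coe_zero, Pi.zero_apply] at this
    exact hvol_pos.ne' this
  have hexp : 1 / p.toReal + 1 / p'.toReal = 1 := by
    by_cases hpt : p = ⊤
    · have h1 : p'⁻¹ = 1 := by rw [hpt] at hpq; simpa using hpq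
      have hp'1 : p' = 1 := by simpa using congrArg (·⁻¹) h1
      simp [hpt, hp'1]
    by_cases hp't : p' = ⊤
    · have h1 : p⁻¹ = 1 := by rw [hp't] at hpq; simpa using hpq
      have hp1 : p = 1 := by simpa using congrArg (·⁻¹) h1
      simp [hp1, hp't]
    have h1 : (p⁻¹ + p'⁻¹).toReal = 1 := by rw [hpq]; simp
    rw [ENNReal.toReal_add (by simp [hp0]) (by simp [hp'0]), ENNReal.toReal_inv,
      ENNReal.toReal_inv] at h1
    rw [one_div, one_div]; exact h1
  set V := volume T with hVdef
  have hVrpow_ne_top : ∀ r : ℝ, 0 ≤ r → V ^ r ≠ ⊤ := fun r hr =>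
    ENNReal.rpow_ne_top_of_nonneg hr hvol_fin.ne
  have hlpσ : lpOn p T (fun x => ‖gradient σh x‖)
      = ‖L‖ * (V ^ (1 / p.toReal)).toReal := by
    rw [lpOn, hgradσ, eLpNorm_const _ hp0 hμ0, Measure.restrict_apply_univ,
      ENNReal.toReal_mul]
    congr 1
    simp [Real.norm_of_nonneg (norm_nonneg L)]
  have hlpv : lpOn p' T (fun x => ‖gradient vh x‖)
      = ‖M‖ * (V ^ (1 / p'.toReal)).toReal := by
    rw [lpOn, hgradv, eLpNorm_const _ hp'0 hμ0, Measure.restrict_apply_univ,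
      ENNReal.toReal_mul]
    congr 1
    simp [Real.norm_of_nonneg (norm_nonneg M)]
  have hVprod : (V ^ (1 / p.toReal)).toReal * (V ^ (1 / p'.toReal)).toReal = V.toReal := by
    rw [← ENNReal.toReal_mul, ← ENNReal.rpow_add _ _ hvol_pos.ne' hvol_fin.ne, hexp,
      ENNReal.rpow_one]
  have hRHS : lpOn p T (fun x => ‖gradient σh x‖) * lpOn p' T (fun x => ‖gradient vh x‖)
      = ‖L‖ * ‖M‖ * V.toReal := by
    rw [hlpσ, hlpv]
    rw [← hVprod]; ring
  rw [hRHS]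
  refine hIb.trans ?_
  have hV0 : 0 ≤ V.toReal := ENNReal.toReal_nonneg
  nlinarith [norm_nonneg L, norm_nonneg M, mul_nonneg (norm_nonneg L) (norm_nonneg M),
    mul_nonneg (mul_nonneg (norm_nonneg L) (norm_nonneg M)) hV0, sq_nonneg h, hh0,
    mul_nonneg (mul_nonneg (mul_nonneg (norm_nonneg L) (norm_nonneg M)) hV0) (mul_nonneg hh0 hh0)]
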